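/- Let τ* = τ(1 − σ/(δ+σ)) = τδ/(δ+σ) > 0 and a = τ*(λᵤ − λₚ) − γᵤγₚ. Define P(x) = τ*γᵤx² + αγₚn xⁿ + (ατ*n + ργₚα/μ)xⁿ⁺¹ + ρτ*(α/μ)xⁿ⁺². Then the function Q(x) = γₚλᵤ + a x − P(x) has exactly one positive root, i.e., there is a unique u∞ > 0 with Q(u∞) = 0. -/

import Mathlib

open Set

private lemma strictConvexOn_const_mul {c : ℝ} (hc : 0 < c) {f : ℝ → ℝ} {s : Set ℝ}
    (hf : StrictConvexOn ℝ s f) : StrictConvexOn ℝ s fun x => c * f x := by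
  refine ⟨hf.1, fun x hx y hy hxy a b ha hb hab => ?_⟩
  have h := hf.2 hx hy hxy ha hb hab
  simp only [smul_eq_mul] at h ⊢
  nlinarith [h]

private lemma convexOn_const_mul {c : ℝ} (hc : 0 ≤ c) {f : ℝ → ℝ} {s : Set ℝ}
    (hf : ConvexOn ℝ s f) : ConvexOn ℝ s fun x => c * f x := by
  simpa [smul_eq_mul] using hf.smul hc

private lemma convexOn_pow_Ici (n : ℕ) (hn : 1 ≤ n) :
    ConvexOn ℝ (Ici (0:ℝ)) fun x : ℝ => x ^ n := by
  rcases eq_or_lt_of_le hn with h | h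
  · rw [← h]; simp only [pow_one]; exact convexOn_id (convex_Ici (0:ℝ))
  · exact (strictConvexOn_pow h).convexOn

/-- The function `Q(x) = γₚλᵤ + a x - P(x)` has a unique positive root, where
`a = τ*(λᵤ - λₚ) - γᵤγₚ`, `τ* = τδ/(δ+σ)` and
`P(x) = τ*γᵤx² + αγₚn xⁿ + (ατ*n + ργₚα/μ)xⁿ⁺¹ + ρτ*(α/μ)xⁿ⁺²`. -/
theorem unique_positive_root
    (lamu lamp gu gp tau sig del rho mu alpha : ℝ)
    (hlamu : 0 < lamu) (hlamp : 0 < lamp) (hgu : 0 < gu) (hgp : 0 < gp)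
    (htau : 0 < tau) (hsig : 0 < sig) (hdel : 0 < del) (hrho : 0 < rho)
    (hmu : 0 < mu) (halpha : 0 < alpha)
    (n : ℕ) (hn : 1 ≤ n) :
    ∃! x : ℝ, 0 < x ∧
      gp * lamu + ((tau * del / (del + sig)) * (lamu - lamp) - gu * gp) * x -
        ((tau * del / (del + sig)) * gu * x ^ 2 + alpha * gp * n * x ^ n
          + (alpha * (tau * del / (del + sig)) * n + rho * gp * (alpha / mu)) * x ^ (n + 1)
          + rho * (tau * del / (del + sig)) * (alpha / mu) * x ^ (n + 2)) = 0 := by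
  set t : ℝ := tau * del / (del + sig) with ht_def
  have ht : 0 < t := by positivity
  set a0 : ℝ := t * (lamu - lamp) - gu * gp with ha0_def
  set P : ℝ → ℝ := fun x => t * gu * x ^ 2 + alpha * gp * n * x ^ n
      + (alpha * t * n + rho * gp * (alpha / mu)) * x ^ (n + 1)
      + rho * t * (alpha / mu) * x ^ (n + 2) with hP_def
  set Q : ℝ → ℝ := fun x => gp * lamu + a0 * x - P x with hQ_def
  show ∃! x : ℝ, 0 < x ∧ Q x = 0
  -- `P` is strictly convex on `[0,∞)`
  have hP : StrictConvexOn ℝ (Ici (0:ℝ)) P := by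
    have h1 : StrictConvexOn ℝ (Ici (0:ℝ)) fun x : ℝ => t * gu * x ^ 2 :=
      strictConvexOn_const_mul (by positivity) (strictConvexOn_pow le_rfl)
    have h2 : ConvexOn ℝ (Ici (0:ℝ)) fun x : ℝ => alpha * gp * n * x ^ n :=
      convexOn_const_mul (by positivity) (convexOn_pow_Ici n hn)
    have h3 : ConvexOn ℝ (Ici (0:ℝ)) fun x : ℝ =>
        (alpha * t * n + rho * gp * (alpha / mu)) * x ^ (n + 1) :=
      convexOn_const_mul (by positivity) (convexOn_pow_Ici (n+1) (by omega))
    have h4 : ConvexOn ℝ (Ici (0:ℝ)) fun x : ℝ => rho * t * (alpha / mu) * x ^ (n + 2) :=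
      convexOn_const_mul (by positivity) (convexOn_pow_Ici (n+2) (by omega))
    exact ((h1.add_convexOn h2).add_convexOn h3).add_convexOn h4
  -- the affine part is concave
  have hL : ConcaveOn ℝ (Ici (0:ℝ)) fun x : ℝ => gp * lamu + a0 * x := by
    refine ⟨convex_Ici 0, fun x _ y _ a b ha hb hab => ?_⟩
    simp only [smul_eq_mul]
    apply le_of_eq
    linear_combination (gp * lamu) * hab
  have hQconc : StrictConcaveOn ℝ (Ici (0:ℝ)) Q := hL.sub_strictConvexOn hP
  have hQ0 : Q 0 = gp * lamu := by
    simp [hQ_def, hP_def, zero_pow (by omega : n ≠ 0)]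
  have hQ0pos : 0 < Q 0 := by rw [hQ0]; positivity
  -- no two distinct positive roots
  have huniq : ∀ p q : ℝ, 0 < p → p < q → Q p = 0 → Q q = 0 → False := by
    intro p q hp hpq hQp hQq
    have hq : 0 < q := hp.trans hpq
    have hb : 0 < p / q := by positivity
    have ha : 0 < (q - p) / q := div_pos (by linarith) hq
    have hab : (q - p) / q + p / q = 1 := by field_simp; ring
    have hne : (0:ℝ) ≠ q := hq.ne
    have h := hQconc.2 (self_mem_Ici) (mem_Ici.mpr hq.le) hne ha hb hab
    have hcomb : ((q - p) / q) • (0:ℝ) + ((p / q)) • q = p := by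
      simp only [smul_eq_mul, mul_zero, zero_add]
      field_simp
    rw [hcomb] at h
    simp only [smul_eq_mul, hQp, hQq] at h
    nlinarith [mul_pos ha hQ0pos]
  -- a point where `Q` is negative
  have hQcont : Continuous Q := by
    simp only [hQ_def, hP_def]
    fun_prop
  obtain ⟨M, hM1, hQM⟩ : ∃ M : ℝ, 1 ≤ M ∧ Q M < 0 := by
    set b : ℝ := t * gu with hb_def
    have hb : 0 < b := by positivity
    refine ⟨max 1 ((gp * lamu + |a0| + 1) / b), le_max_left _ _, ?_⟩
    set M : ℝ := max 1 ((gp * lamu + |a0| + 1) / b) with hM_def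
    have hM1 : 1 ≤ M := le_max_left _ _
    have hM0 : 0 < M := lt_of_lt_of_le one_pos hM1
    have hbM : gp * lamu + |a0| + 1 ≤ b * M := by
      have := le_max_right 1 ((gp * lamu + |a0| + 1) / b)
      rw [div_le_iff₀ hb] at this
      linarith [this]
    have h2 : 0 ≤ alpha * gp * n * M ^ n := by positivity
    have h3 : 0 ≤ (alpha * t * n + rho * gp * (alpha / mu)) * M ^ (n + 1) := by positivity
    have h4 : 0 ≤ rho * t * (alpha / mu) * M ^ (n + 2) := by positivity
    have haM : a0 * M ≤ |a0| * M := mul_le_mul_of_nonneg_right (le_abs_self a0) hM0.le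
    have hbMM : (gp * lamu + |a0| + 1) * M ≤ b * M * M :=
      mul_le_mul_of_nonneg_right hbM hM0.le
    have hc0 : 0 < gp * lamu := by positivity
    show gp * lamu + a0 * M - (b * M ^ 2 + alpha * gp * n * M ^ n
      + (alpha * t * n + rho * gp * (alpha / mu)) * M ^ (n + 1)
      + rho * t * (alpha / mu) * M ^ (n + 2)) < 0
    nlinarith [hbMM, haM, h2, h3, h4, hc0, hM1, abs_nonneg a0]
  -- existence via IVT
  obtain ⟨x, hxmem, hQx⟩ : ∃ x ∈ Ioo (0:ℝ) M, Q x = 0 := by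
    have hsub := intermediate_value_Ioo' (le_trans zero_le_one hM1) hQcont.continuousOn
    have : (0:ℝ) ∈ Ioo (Q M) (Q 0) := ⟨hQM, hQ0pos⟩
    obtain ⟨x, hx, hQx⟩ := hsub this
    exact ⟨x, hx, hQx⟩
  refine ⟨x, ⟨hxmem.1, hQx⟩, ?_⟩
  rintro y ⟨hy0, hQy⟩
  rcases lt_trichotomy y x with h | h | h
  · exact absurd (huniq y x hy0 h hQy hQx) (fun f => f)
  · exact h
  · exact absurd (huniq x y hxmem.1 h hQx hQy) (fun f => f)
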